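/- The quantum state diffusion (QSD) choice a(x) = (−iH + Σ_k (⟨x, L_k†x⟩ L_k − ½L_k†L_k − ½|⟨x, L_k x⟩|²))x, b_{k,1}(x) = (1/√2)(L_k − ⟨x, L_k x⟩)x, b_{k,2}(x) = (i/√2)(L_k − ⟨x, L_k x⟩)x satisfies, for all unit vectors x ∈ ℂ^n: a(x)x† + x a(x)† + Σ_k (b_{k,1}(x)b_{k,1}(x)† + b_{k,2}(x)b_{k,2}(x)†) = −i[H, xx†] + Σ_k (L_k xx† L_k† − ½{L_k†L_k, xx†}). -/

import Mathlib

open Matrix Finset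

/-- The outer product `v w†` of two complex vectors. -/
noncomputable def outerProd {n m : ℕ} (v : Fin n → ℂ) (w : Fin m → ℂ) :
    Matrix (Fin n) (Fin m) ℂ :=
  Matrix.of fun i j => v i * star (w j)

/-- The inner product `⟨v, w⟩ = v†w`. -/
noncomputable def cInner {n : ℕ} (v w : Fin n → ℂ) : ℂ := ∑ i, star (v i) * w i

namespace QSDaux

variable {n : ℕ}

lemma outer_mulVec_left (A : Matrix (Fin n) (Fin n) ℂ) (v w : Fin n → ℂ) :
    outerProd (A.mulVec v) w = A * outerProd v w := by
  ext i j
  simp only [outerProd, Matrix.mulVec, Matrix.mul_apply, dotProduct, Matrix.of_apply,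
    Finset.sum_mul]
  exact Finset.sum_congr rfl fun _ _ => by ring

lemma outer_mulVec_right (A : Matrix (Fin n) (Fin n) ℂ) (v w : Fin n → ℂ) :
    outerProd v (A.mulVec w) = outerProd v w * Aᴴ := by
  ext i j
  simp only [outerProd, Matrix.mulVec, Matrix.mul_apply, dotProduct, Matrix.of_apply,
    Matrix.conjTranspose_apply, star_sum, star_mul', Finset.mul_sum]
  exact Finset.sum_congr rfl fun _ _ => by ring

lemma outer_smul_left (c : ℂ) (v w : Fin n → ℂ) :
    outerProd (c • v) w = c • outerProd v w := by
  ext i j; simp [outerProd, mul_assoc]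

lemma outer_smul_right (c : ℂ) (v w : Fin n → ℂ) :
    outerProd v (c • w) = star c • outerProd v w := by
  ext i j; simp [outerProd]; ring

lemma outer_add_left (u v w : Fin n → ℂ) :
    outerProd (u + v) w = outerProd u w + outerProd v w := by
  ext i j; simp [outerProd, add_mul]

lemma outer_add_right (u v w : Fin n → ℂ) :
    outerProd u (v + w) = outerProd u v + outerProd u w := by
  ext i j; simp [outerProd, mul_add]

lemma outer_sub_left (u v w : Fin n → ℂ) :
    outerProd (u - v) w = outerProd u w - outerProd v w := by
  ext i j; simp [outerProd, sub_mul]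

lemma outer_sub_right (u v w : Fin n → ℂ) :
    outerProd u (v - w) = outerProd u v - outerProd u w := by
  ext i j; simp [outerProd, mul_sub]

lemma outer_sum_left {K : ℕ} (v : Fin K → Fin n → ℂ) (w : Fin n → ℂ) :
    outerProd (∑ k, v k) w = ∑ k, outerProd (v k) w := by
  ext i j; simp [outerProd, Matrix.sum_apply, Finset.sum_mul]

lemma cInner_conjT (A : Matrix (Fin n) (Fin n) ℂ) (x : Fin n → ℂ) :
    cInner x (Aᴴ.mulVec x) = star (cInner x (A.mulVec x)) := by
  simp only [cInner, Matrix.mulVec, dotProduct, Matrix.conjTranspose_apply, star_sum, star_mul',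
    star_star, Finset.mul_sum, Finset.sum_mul]
  rw [Finset.sum_comm]
  exact Finset.sum_congr rfl fun _ _ => Finset.sum_congr rfl fun _ _ => by ring

lemma abs_sq (z : ℂ) : ((‖z‖ : ℂ)) ^ 2 = z * star z := by
  rw [← Complex.ofReal_pow, Complex.sq_norm]
  exact (Complex.mul_conj z).symm

end QSDaux

namespace QSDaux

lemma outer_sum_right {K n : ℕ} (v : Fin n → ℂ) (w : Fin K → Fin n → ℂ) :
    outerProd v (∑ k, w k) = ∑ k, outerProd v (w k) := by
  ext i j; simp [outerProd, Matrix.sum_apply, Finset.mul_sum]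

lemma sum_mulVec {K n : ℕ} (A : Fin K → Matrix (Fin n) (Fin n) ℂ) (x : Fin n → ℂ) :
    (∑ k, A k).mulVec x = ∑ k, (A k).mulVec x := by
  ext i; simp [Matrix.mulVec, dotProduct, Matrix.sum_apply, Finset.sum_mul]
  exact Finset.sum_comm

lemma hb {n : ℕ} (d e : Fin n → ℂ) :
    outerProd ((1 / Real.sqrt 2 : ℂ) • d) ((1 / Real.sqrt 2 : ℂ) • e) +
      outerProd ((Complex.I / Real.sqrt 2) • d) ((Complex.I / Real.sqrt 2) • e) =
    outerProd d e := by
  rw [outer_smul_left, outer_smul_right, outer_smul_left, outer_smul_right, smul_smul, smul_smul,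
    ← add_smul]
  have h2 : ((Real.sqrt 2 : ℝ) : ℂ) * ((Real.sqrt 2 : ℝ) : ℂ) = 2 := by
    rw [← Complex.ofReal_mul, Real.mul_self_sqrt (by norm_num)]
    norm_num
  have hne : ((Real.sqrt 2 : ℝ) : ℂ) ≠ 0 := by
    intro h
    simp [h] at h2
  have : (1 / Real.sqrt 2 : ℂ) * star (1 / Real.sqrt 2 : ℂ) +
      (Complex.I / Real.sqrt 2) * star (Complex.I / Real.sqrt 2) = 1 := by
    simp only [Complex.star_def, map_div₀, _root_.map_one, Complex.conj_ofReal, Complex.conj_I]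
    field_simp
    linear_combination -h2 - Complex.I_sq
  rw [this, one_smul]

end QSDaux

namespace QSDaux

lemma hpart {n : ℕ} (H : Matrix (Fin n) (Fin n) ℂ) (hH : Hᴴ = H) (x : Fin n → ℂ) :
    outerProd (((-Complex.I) • H).mulVec x) x + outerProd x (((-Complex.I) • H).mulVec x) =
      (-Complex.I) • (H * outerProd x x - outerProd x x * H) := by
  rw [Matrix.smul_mulVec, outer_smul_left, outer_smul_right, outer_mulVec_left,
    outer_mulVec_right, hH]
  simp only [star_neg, Complex.star_def, Complex.conj_I]
  module

lemma perk {n : ℕ} (A : Matrix (Fin n) (Fin n) ℂ) (x : Fin n → ℂ) :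
    outerProd (((star (cInner x (A.mulVec x))) • A - (1 / 2 : ℂ) • (Aᴴ * A) -
        ((1 / 2 : ℂ) * (‖cInner x (A.mulVec x)‖ : ℂ) ^ 2) •
          (1 : Matrix (Fin n) (Fin n) ℂ)).mulVec x) x +
      outerProd x (((star (cInner x (A.mulVec x))) • A - (1 / 2 : ℂ) • (Aᴴ * A) -
        ((1 / 2 : ℂ) * (‖cInner x (A.mulVec x)‖ : ℂ) ^ 2) •
          (1 : Matrix (Fin n) (Fin n) ℂ)).mulVec x) +
      (outerProd ((1 / Real.sqrt 2 : ℂ) • (A.mulVec x - (cInner x (A.mulVec x)) • x))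
          ((1 / Real.sqrt 2 : ℂ) • (A.mulVec x - (cInner x (A.mulVec x)) • x)) +
        outerProd ((Complex.I / Real.sqrt 2) • (A.mulVec x - (cInner x (A.mulVec x)) • x))
          ((Complex.I / Real.sqrt 2) • (A.mulVec x - (cInner x (A.mulVec x)) • x))) =
    A * outerProd x x * Aᴴ -
      (1 / 2 : ℂ) • (Aᴴ * A * outerProd x x + outerProd x x * (Aᴴ * A)) := by
  rw [hb]
  set s : ℂ := cInner x (A.mulVec x) with hs
  rw [abs_sq]
  simp only [Matrix.sub_mulVec, Matrix.smul_mulVec, Matrix.one_mulVec,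
    outer_sub_left, outer_sub_right, outer_smul_left, outer_smul_right,
    outer_mulVec_left, outer_mulVec_right, Matrix.conjTranspose_mul,
    Matrix.conjTranspose_conjTranspose, star_mul', star_star, star_smul]
  simp only [Complex.star_def, _root_.map_mul, map_div₀, _root_.map_one, map_ofNat, Complex.conj_conj]
  simp only [sub_mul, smul_mul_assoc, smul_sub, Matrix.mul_assoc]
  module

end QSDaux

/-- Quantum state diffusion (QSD) satisfies the algebraic unraveling condition
for the Lindblad generator, for unit vectors `x`. -/
theorem qsd_unraveling (n K : ℕ) (H : Matrix (Fin n) (Fin n) ℂ) (hH : Hᴴ = H)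
    (L : Fin K → Matrix (Fin n) (Fin n) ℂ) (x : Fin n → ℂ) (hx : cInner x x = 1) :
    (letI a : Fin n → ℂ :=
        ((-Complex.I) • H +
          ∑ k, ((cInner x ((L k)ᴴ.mulVec x)) • L k - (1 / 2 : ℂ) • ((L k)ᴴ * L k) -
            ((1 / 2 : ℂ) * (‖cInner x ((L k).mulVec x)‖ : ℂ) ^ 2) •
              (1 : Matrix (Fin n) (Fin n) ℂ))).mulVec x
     letI b1 : Fin K → Fin n → ℂ := fun k =>
        (1 / Real.sqrt 2 : ℂ) • ((L k).mulVec x - (cInner x ((L k).mulVec x)) • x)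
     letI b2 : Fin K → Fin n → ℂ := fun k =>
        (Complex.I / Real.sqrt 2) • ((L k).mulVec x - (cInner x ((L k).mulVec x)) • x)
     outerProd a x + outerProd x a + ∑ k, (outerProd (b1 k) (b1 k) + outerProd (b2 k) (b2 k))) =
      (-Complex.I) • (H * outerProd x x - outerProd x x * H) +
        ∑ k, (L k * outerProd x x * (L k)ᴴ -
          (1 / 2 : ℂ) • ((L k)ᴴ * L k * outerProd x x + outerProd x x * ((L k)ᴴ * L k))) := by
  simp only [QSDaux.cInner_conjT]
  rw [Matrix.add_mulVec, QSDaux.sum_mulVec]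
  simp only [QSDaux.outer_add_left, QSDaux.outer_sum_left, QSDaux.outer_add_right,
    QSDaux.outer_sum_right]
  rw [← QSDaux.hpart H hH x,
    Finset.sum_congr rfl (fun k _ => (QSDaux.perk (L k) x).symm)]
  simp only [Finset.sum_add_distrib]
  abel
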